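/- Let G be a Lie group and H an abstract subgroup of finite index in G. Then H is closed in G. -/

import Mathlib

open Set Manifold Filter Topology

theorem mfderiv_pow_one
    {E : Type} [NormedAddCommGroup E] [NormedSpace ℝ E] [FiniteDimensional ℝ E]
    {H : Type} [TopologicalSpace H] (I : ModelWithCorners ℝ E H)
    {G : Type} [TopologicalSpace G] [ChartedSpace H G] [Group G] [LieGroup I (⊤ : ℕ∞) G]
    (k : ℕ) :
    mfderiv I I (fun g : G => g ^ k) (1 : G) =
      (k : ℝ) • (ContinuousLinearMap.id ℝ (TangentSpace I (1 : G))) := by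
  induction k with
  | zero =>
      have : (fun g : G => g ^ 0) = fun _ => (1 : G) := by funext g; simp
      rw [this, mfderiv_const]
      simp
      rfl
  | succ k ih =>
      have hmul : ContMDiff (I.prod I) I (⊤ : ℕ∞) (fun p : G × G => p.1 * p.2) := contMDiff_mul I _
      have hmulD : MDifferentiableAt (I.prod I) I (fun p : G × G => p.1 * p.2) (1, 1) :=
        hmul.mdifferentiableAt (by simp)
      have hpowD : MDifferentiableAt I I (fun g : G => g ^ k) (1 : G) :=
        (contMDiff_pow (n := ((⊤ : ℕ∞) : WithTop ℕ∞)) k).mdifferentiableAt (by simp)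
      have hidD : MDifferentiableAt I I (fun g : G => g) (1 : G) := mdifferentiableAt_id
      have hcomp : (fun g : G => g ^ (k + 1)) =
          (fun p : G × G => p.1 * p.2) ∘ (fun g : G => (g ^ k, g)) := by
        funext g; simp [pow_succ]
      rw [hcomp, mfderiv_comp_of_eq hmulD (hpowD.prodMk hidD) (by simp)]
      have h1 : mfderiv (I.prod I) I (fun p : G × G => p.1 * p.2) ((fun g : G => (g ^ k, g)) 1)
          = mfderiv (I.prod I) I (fun p : G × G => p.1 * p.2) (1, 1) := by
        apply mfderiv_congr_point; simp
      have h2 : mfderiv (I.prod I) I (fun p : G × G => p.1 * p.2) (1, 1) =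
          (ContinuousLinearMap.fst ℝ E E) + (ContinuousLinearMap.snd ℝ E E) := by
        rw [mfderiv_prod_eq_add_comp hmulD]
        have e1 : mfderiv I I (fun z : G => z * 1) (1 : G)
            = ContinuousLinearMap.id ℝ (TangentSpace I (1 : G)) := by
          rw [mfderiv_congr (show (fun z : G => z * 1) = @id G by funext z; simp), mfderiv_id]
        have e2 : mfderiv I I (fun z : G => (1 : G) * z) (1 : G)
            = ContinuousLinearMap.id ℝ (TangentSpace I (1 : G)) := by
          rw [mfderiv_congr (show (fun z : G => (1 : G) * z) = @id G by funext z; simp), mfderiv_id]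
        rw [e1, e2]
        ext v <;> rfl
      have h3 : mfderiv I (I.prod I) (fun g : G => (g ^ k, g)) (1 : G) =
          ((k : ℝ) • (ContinuousLinearMap.id ℝ E)).prod (ContinuousLinearMap.id ℝ E) := by
        rw [hpowD.mfderiv_prod hidD, ih,
          mfderiv_congr (show (fun g : G => g) = @id G from rfl), mfderiv_id]
        rfl
      rw [h1, h2, h3]
      ext v
      have : ((ContinuousLinearMap.fst ℝ E E + ContinuousLinearMap.snd ℝ E E).comp
          (((k : ℝ) • ContinuousLinearMap.id ℝ E).prod (ContinuousLinearMap.id ℝ E))) v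
          = (k : ℝ) • v + v := by
        simp
        rfl
      refine this.trans ?_
      show (k : ℝ) • v + v = (((k + 1 : ℕ) : ℝ)) • v
      push_cast
      rw [add_smul, one_smul]

theorem finite_index_subgroup_isClosed_of_lieGroup
    {E : Type} [NormedAddCommGroup E] [NormedSpace ℝ E] [FiniteDimensional ℝ E]
    {H : Type} [TopologicalSpace H] (I : ModelWithCorners ℝ E H)
    {G : Type} [TopologicalSpace G] [ChartedSpace H G] [Group G] [LieGroup I (⊤ : ℕ∞) G]
    (K : Subgroup G) (hK : K.index ≠ 0) :
    IsClosed (K : Set G) := by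
  haveI : ContinuousMul G := continuousMul_of_contMDiffMul (I := I) (n := ((⊤ : ℕ∞) : WithTop ℕ∞))
  haveI : K.FiniteIndex := ⟨hK⟩
  set N : Subgroup G := K.normalCore with hN
  set m : ℕ := N.index with hmdef
  have hm : m ≠ 0 := Subgroup.FiniteIndex.index_ne_zero
  set p : G → G := fun g => g ^ m with hp
  have hpN : ∀ g : G, p g ∈ N := fun g => N.pow_index_mem g
  have hp1 : p 1 = 1 := one_pow m
  -- chart data
  set φ := extChartAt I (1 : G) with hφ
  set x₀ := φ 1 with hx₀
  have hx₀t : x₀ ∈ φ.target := mem_extChartAt_target 1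
  have hx₀A : x₀ ∈ range I := extChartAt_target_subset_range 1 hx₀t
  -- smoothness of p in the chart
  have hsm : ContMDiffAt I I (⊤ : ℕ∞) p 1 := (contMDiff_pow m).contMDiffAt
  have hiff := (contMDiffAt_iff).1 hsm
  have hcd : ContDiffWithinAt ℝ ((⊤ : ℕ∞) : WithTop ℕ∞) (φ ∘ p ∘ φ.symm) (range I) x₀ := by
    have := hiff.2
    rwa [hp1] at this
  set F : E → E := φ ∘ p ∘ φ.symm with hF
  -- derivative of F at x₀ within range I
  have hFder : HasFDerivWithinAt F ((m : ℝ) • ContinuousLinearMap.id ℝ E) (range I) x₀ := by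
    have hmd : MDifferentiableAt I I p 1 := hsm.mdifferentiableAt (by simp)
    have h2 := hmd.hasMFDerivAt.2
    rw [mfderiv_pow_one I m] at h2
    have hW : writtenInExtChartAt I I (1 : G) p = F := by
      rw [hF, hφ]
      unfold writtenInExtChartAt
      rw [hp1]
    rw [hW] at h2
    exact h2
  -- get a set on which F is C² with good properties
  obtain ⟨u, hu_mem, hu_sub, hcdo⟩ :=
    hcd.contDiffOn (m := 2) (by norm_cast) (by simp)
  rw [insert_eq_of_mem hx₀A] at hu_mem hu_sub
  -- continuity of p ∘ φ.symm on the target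
  have hsymm_ct : ContinuousWithinAt (p ∘ φ.symm) φ.target x₀ :=
    (continuous_pow m).continuousAt.comp_continuousWithinAt
      ((continuousOn_extChartAt_symm 1) x₀ hx₀t)
  have hpre : (p ∘ φ.symm) ⁻¹' φ.source ∈ 𝓝[φ.target] x₀ := by
    apply hsymm_ct.preimage_mem_nhdsWithin
    apply (isOpen_extChartAt_source 1).mem_nhds
    show p (φ.symm x₀) ∈ φ.source
    rw [show φ.symm x₀ = 1 from extChartAt_to_inv 1, hp1]
    exact mem_extChartAt_source 1
  have htmem : φ.target ∈ 𝓝[range I] x₀ := extChartAt_target_mem_nhdsWithin 1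
  have hpre' : (p ∘ φ.symm) ⁻¹' φ.source ∈ 𝓝[range I] x₀ :=
    nhdsWithin_le_of_mem htmem hpre
  -- the good set W
  have hW_mem : u ∩ (φ.target ∩ (p ∘ φ.symm) ⁻¹' φ.source) ∈ 𝓝[range I] x₀ :=
    inter_mem hu_mem (inter_mem htmem hpre')
  obtain ⟨v, hv_open, hx₀v, hv⟩ := mem_nhdsWithin.1 hW_mem
  set u' : Set E := range I ∩ v with hu'
  have hu'_sub : u' ⊆ u ∩ (φ.target ∩ (p ∘ φ.symm) ⁻¹' φ.source) := fun x hx =>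
    hv ⟨hx.2, hx.1⟩
  have hx₀u' : x₀ ∈ u' := ⟨hx₀A, hx₀v⟩
  have hu'_ud : UniqueDiffOn ℝ u' := I.uniqueDiffOn.inter hv_open
  have hcdo' : ContDiffOn ℝ 2 F u' := hcdo.mono fun x hx => (hu'_sub hx).1
  -- derivative at x₀ within u'
  have hfdw : fderivWithin ℝ F u' x₀ = (m : ℝ) • ContinuousLinearMap.id ℝ E :=
    (hFder.mono inter_subset_left).fderivWithin (hu'_ud x₀ hx₀u')
  -- the derivative is a unit at x₀
  have hunit₀ : IsUnit (fderivWithin ℝ F u' x₀) := by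
    rw [hfdw]
    refine ⟨⟨(m : ℝ) • ContinuousLinearMap.id ℝ E, (m : ℝ)⁻¹ • ContinuousLinearMap.id ℝ E,
      ?_, ?_⟩, rfl⟩ <;>
    · ext x
      simp [smul_smul, mul_inv_cancel₀, inv_mul_cancel₀,
        Nat.cast_ne_zero.2 hm]
  -- continuity of the derivative
  have hdercont : ContinuousWithinAt (fderivWithin ℝ F u') u' x₀ :=
    (hcdo'.continuousOn_fderivWithin hu'_ud (by norm_num)) x₀ hx₀u'
  have hunits_mem : (fderivWithin ℝ F u') ⁻¹' {T : E →L[ℝ] E | IsUnit T} ∈ 𝓝[u'] x₀ :=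
    hdercont.preimage_mem_nhdsWithin (Units.isOpen.mem_nhds hunit₀)
  obtain ⟨w, hw_open, hx₀w, hw⟩ := mem_nhdsWithin.1 hunits_mem
  -- pick an interior point y of range I near x₀
  have hx₀cl : x₀ ∈ closure (interior (range I)) := by
    rw [← I.range_eq_closure_interior]; exact hx₀A
  obtain ⟨y, hy_vw, hy_int⟩ :=
    (mem_closure_iff.1 hx₀cl) (v ∩ w) (hv_open.inter hw_open) ⟨hx₀v, hx₀w⟩
  have hyA : y ∈ range I := interior_subset hy_int
  have hyu' : y ∈ u' := ⟨hyA, hy_vw.1⟩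
  have hy_unit : IsUnit (fderivWithin ℝ F u' y) := hw ⟨hy_vw.2, hyu'⟩
  have hu'_nhds : u' ∈ 𝓝 y :=
    mem_of_superset ((isOpen_interior.inter hv_open).mem_nhds ⟨hy_int, hy_vw.1⟩)
      (fun z hz => ⟨interior_subset hz.1, hz.2⟩)
  -- inverse function theorem at y
  have hFy : ContDiffAt ℝ 2 F y := hcdo'.contDiffAt hu'_nhds
  have hfdy : fderivWithin ℝ F u' y = fderiv ℝ F y := fderivWithin_of_mem_nhds hu'_nhds
  have hy_unit' : IsUnit (fderiv ℝ F y) := hfdy ▸ hy_unit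
  set e : E ≃L[ℝ] E := ContinuousLinearEquiv.ofUnit hy_unit'.unit with he
  have hce : (e : E →L[ℝ] E) = fderiv ℝ F y := hy_unit'.unit_spec
  have hstrict : HasStrictFDerivAt F (e : E →L[ℝ] E) y := by
    rw [hce]
    exact hFy.hasStrictFDerivAt (by norm_num)
  have hmap : map F (𝓝 y) = 𝓝 (F y) := hstrict.map_nhds_eq_of_equiv
  -- transfer back to G
  set D : Set E := interior (range I) ∩ v with hD
  have hD_nhds : D ∈ 𝓝 y := (isOpen_interior.inter hv_open).mem_nhds ⟨hy_int, hy_vw.1⟩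
  have hFD : F '' D ∈ 𝓝 (F y) := hmap ▸ image_mem_map hD_nhds
  have hD_sub : D ⊆ u ∩ (φ.target ∩ (p ∘ φ.symm) ⁻¹' φ.source) := fun x hx =>
    hu'_sub ⟨interior_subset hx.1, hx.2⟩
  set gy : G := φ.symm y with hgy
  have hpgy_src : p gy ∈ φ.source := (hD_sub ⟨hy_int, hy_vw.1⟩).2.2
  have hFy_eq : F y = φ (p gy) := rfl
  -- the neighborhood of p gy inside N
  have hNnhds : (N : Set G) ∈ 𝓝 (p gy) := by
    have hφct : ContinuousAt φ (p gy) := continuousAt_extChartAt' hpgy_src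
    have h1 : φ ⁻¹' (F '' D) ∈ 𝓝 (p gy) := hφct.preimage_mem_nhds (hFy_eq ▸ hFD)
    have h2 : φ ⁻¹' (F '' D) ∩ φ.source ∈ 𝓝 (p gy) :=
      inter_mem h1 ((isOpen_extChartAt_source 1).mem_nhds hpgy_src)
    refine mem_of_superset h2 ?_
    rintro g ⟨⟨d, hdD, hdF⟩, hg_src⟩
    have hd := hD_sub hdD
    have : g = p (φ.symm d) := by
      apply φ.injOn hg_src hd.2.2
      rw [← hdF]; rfl
    rw [this]
    exact hpN _
  have hNopen : IsOpen (N : Set G) := N.isOpen_of_mem_nhds hNnhds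
  have hKopen : IsOpen (K : Set G) := by
    apply K.isOpen_of_mem_nhds (g := 1)
    exact mem_of_superset (hNopen.mem_nhds N.one_mem) K.normalCore_le
  exact K.isClosed_of_isOpen hKopen
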